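/- arXiv:2207.12684 — 4 statements merged into one kernel-verified Lean document; each statement's English description precedes it below -/
import Mathlib

section
/- For every ε > 0 there exists a constant C_ε > 0 such that for any two relatively prime integers a, b and any natural number D, there is a natural number k ≤ C_ε · D^ε with gcd(a + k·b, D) = 1. -/
open Finset Real

-- small helper: log u ≤ u / 2 for u > 0
lemma log_le_half (u : ℝ) (hu : 0 < u) : Real.log u ≤ u / 2 := by
  have h1 : Real.log u = 2 * Real.log (Real.sqrt u) := by
    rw [Real.log_sqrt hu.le]; ring
  have h2 : Real.log (Real.sqrt u) ≤ Real.sqrt u - 1 :=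
    Real.log_le_sub_one_of_pos (Real.sqrt_pos.mpr hu)
  have h3 : 2 * (Real.sqrt u - 1) ≤ u / 2 := by
    have h4 : (Real.sqrt u - 2) ^ 2 ≥ 0 := sq_nonneg _
    have h5 : Real.sqrt u ^ 2 = u := Real.sq_sqrt hu.le
    nlinarith
  linarith


lemma jac_core' (T : ℕ) (a b : ℤ) (hab : IsCoprime a b) (D : ℕ) (hD : 0 < D)
    (hs : ((D.primeFactors.filter (fun p => T < p)).card ≤ T)) :
    ∃ k : ℕ, 1 ≤ k ∧ k ≤ (T + 2) * 4 ^ T ∧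
      Int.gcd (a + (k : ℤ) * b) (D : ℤ) = 1 := by
  classical
  set S₀ : Finset ℕ := D.primeFactors.filter (fun p => p ≤ T ∧ ¬ ((p : ℤ) ∣ b)) with hS₀
  set S₁ : Finset ℕ := D.primeFactors.filter (fun p => T < p ∧ ¬ ((p : ℤ) ∣ b)) with hS₁
  set P : ℕ := ∏ p ∈ S₀, p with hP
  set s : ℕ := S₁.card with hscard
  have hsT : s ≤ T := le_trans (Finset.card_le_card (by
    intro p hp
    simp only [hS₁, Finset.mem_filter] at hp ⊢
    exact ⟨hp.1, hp.2.1⟩)) hs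
  have hPpos : 0 < P := Finset.prod_pos (fun p hp => by
    simp only [hS₀, Finset.mem_filter] at hp
    exact (Nat.prime_of_mem_primeFactors hp.1).pos)
  -- P ≤ 4^T
  have hP4 : P ≤ 4 ^ T := by
    calc P ≤ ∏ p ∈ Finset.filter Nat.Prime (Finset.range (T + 1)), p := by
            apply Finset.prod_le_prod_of_subset_of_one_le'
            · intro p hp
              simp only [hS₀, Finset.mem_filter] at hp
              simp only [Finset.mem_filter, Finset.mem_range]
              exact ⟨Nat.lt_succ_of_le hp.2.1, Nat.prime_of_mem_primeFactors hp.1⟩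
            · intro p hp _
              exact (Finset.mem_filter.mp hp).2.one_lt.le
      _ ≤ 4 ^ T := primorial_le_4_pow T
  -- coprimality of P and b
  have hPb : IsCoprime (P : ℤ) b := by
    rw [hP]
    push_cast
    apply IsCoprime.prod_left
    intro p hp
    simp only [hS₀, Finset.mem_filter] at hp
    exact (Nat.prime_iff_prime_int.mp (Nat.prime_of_mem_primeFactors hp.1)).coprime_iff_not_dvd.mpr hp.2.2
  obtain ⟨u, v, huv⟩ := hPb
  -- choose r
  set r : ℕ := ((v * (1 - a)) % (P : ℤ)).toNat with hr
  have hrP : (r : ℤ) % (P : ℤ) = (v * (1 - a)) % (P : ℤ) := by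
    rw [hr, Int.toNat_of_nonneg (Int.emod_nonneg _ (by exact_mod_cast hPpos.ne'))]
    rw [Int.emod_emod_of_dvd _ dvd_rfl]
  have hkey : ∀ j : ℕ, (P : ℤ) ∣ a + ((r + P + j * P : ℕ) : ℤ) * b - 1 := by
    intro j
    have h1 : (P : ℤ) ∣ a + (v * (1 - a)) * b - 1 := by
      have h1' : a + (v * (1 - a)) * b - 1 = (a - 1) * (u * P) := by
        have hvb : (1 : ℤ) - v * b = u * P := by linarith [huv]
        calc a + (v * (1 - a)) * b - 1 = (a - 1) * (1 - v * b) := by ring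
          _ = (a - 1) * (u * P) := by rw [hvb]
      exact h1' ▸ ⟨(a - 1) * u, by ring⟩
    have hmod : Int.ModEq (P : ℤ) (r : ℤ) (v * (1 - a)) := hrP
    have h2 : (P : ℤ) ∣ ((r : ℤ) - v * (1 - a)) := hmod.symm.dvd
    have : a + ((r + P + j * P : ℕ) : ℤ) * b - 1
        = (a + (v * (1 - a)) * b - 1) + ((r : ℤ) - v * (1 - a)) * b + (P : ℤ) * (1 + j) * b := by
      push_cast; ring
    rw [this]
    exact dvd_add (dvd_add h1 (Dvd.dvd.mul_right h2 b)) ⟨(1 + j) * b, by ring⟩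
  -- find good j
  have hbad : ∃ j ∈ Finset.range (s + 1),
      ∀ p ∈ S₁, ¬ ((p : ℤ) ∣ a + ((r + P + j * P : ℕ) : ℤ) * b) := by
    by_contra hcon
    push_neg at hcon
    have hsub : Finset.range (s + 1) ⊆ S₁.biUnion
        (fun p => (Finset.range (s + 1)).filter
          (fun j => (p : ℤ) ∣ a + ((r + P + j * P : ℕ) : ℤ) * b)) := by
      intro j hj
      obtain ⟨p, hp, hpd⟩ := hcon j hj
      exact Finset.mem_biUnion.mpr ⟨p, hp, Finset.mem_filter.mpr ⟨hj, hpd⟩⟩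
    have hcard : s + 1 ≤ ∑ p ∈ S₁, ((Finset.range (s + 1)).filter
        (fun j => (p : ℤ) ∣ a + ((r + P + j * P : ℕ) : ℤ) * b)).card := by
      calc s + 1 = (Finset.range (s + 1)).card := (Finset.card_range _).symm
        _ ≤ _ := le_trans (Finset.card_le_card hsub) (Finset.card_biUnion_le)
    have hone : ∀ p ∈ S₁, ((Finset.range (s + 1)).filter
        (fun j => (p : ℤ) ∣ a + ((r + P + j * P : ℕ) : ℤ) * b)).card ≤ 1 := by
      intro p hp
      simp only [hS₁, Finset.mem_filter] at hp
      have hpp := Nat.prime_of_mem_primeFactors hp.1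
      have hppz : Prime (p : ℤ) := Nat.prime_iff_prime_int.mp hpp
      apply Finset.card_le_one.mpr
      intro j₁ hj₁ j₂ hj₂
      simp only [Finset.mem_filter, Finset.mem_range] at hj₁ hj₂
      have hdiff : (p : ℤ) ∣ ((j₁ : ℤ) - j₂) * (P * b) := by
        have : ((j₁ : ℤ) - j₂) * (P * b) =
            (a + ((r + P + j₁ * P : ℕ) : ℤ) * b) - (a + ((r + P + j₂ * P : ℕ) : ℤ) * b) := by
          push_cast; ring
        rw [this]
        exact dvd_sub hj₁.2 hj₂.2
      have hpP : ¬ ((p : ℤ) ∣ (P : ℤ)) := by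
        intro hdvd
        have : p ∣ P := Int.ofNat_dvd.mp (by exact_mod_cast hdvd)
        obtain ⟨q, hq, hpq⟩ := (Prime.dvd_finset_prod_iff hpp.prime _).mp this
        simp only [hS₀, Finset.mem_filter] at hq
        have := (Nat.prime_of_mem_primeFactors hq.1)
        have hpq' : p = q := ((Nat.prime_dvd_prime_iff_eq hpp this).mp hpq)
        omega
      have : (p : ℤ) ∣ ((j₁ : ℤ) - j₂) := by
        rcases hppz.dvd_or_dvd hdiff with h | h
        · exact h
        · rcases hppz.dvd_or_dvd h with h' | h'
          · exact absurd h' hpP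
          · exact absurd h' hp.2.2
      have habs : ((j₁ : ℤ) - j₂).natAbs < p := by
        have h1 : j₁ ≤ s := Nat.lt_succ_iff.mp hj₁.1
        have h2 : j₂ ≤ s := Nat.lt_succ_iff.mp hj₂.1
        have : ((j₁ : ℤ) - j₂).natAbs ≤ s := by omega
        omega
      have := Int.natAbs_dvd_natAbs.mpr this
      simp only [Int.natAbs_natCast] at this
      rcases Nat.eq_zero_of_dvd_of_lt this habs |>.symm with h
      omega
    have := Finset.sum_le_sum hone
    simp only [Finset.sum_const, smul_eq_mul, mul_one] at this
    omega
  obtain ⟨j, hj, hgood⟩ := hbad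
  refine ⟨r + P + j * P, le_trans hPpos (le_trans (Nat.le_add_left P r) (Nat.le_add_right _ _)), ?_, ?_⟩
  · have hrlt : r < P := by
      have : (r : ℤ) < P := by
        rw [hr, Int.toNat_of_nonneg (Int.emod_nonneg _ (by exact_mod_cast hPpos.ne'))]
        exact Int.emod_lt_of_pos _ (by exact_mod_cast hPpos)
      exact_mod_cast this
    have hj' : j ≤ s := Nat.lt_succ_iff.mp (Finset.mem_range.mp hj)
    calc r + P + j * P ≤ P + P + T * P := by
          gcongr
          exact le_trans hj' hsT
      _ = (T + 2) * P := by ring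
      _ ≤ (T + 2) * 4 ^ T := Nat.mul_le_mul_left _ hP4
  · set k : ℕ := r + P + j * P with hk
    by_contra hg
    set g : ℕ := Int.gcd (a + (k : ℤ) * b) D with hgdef
    set q : ℕ := g.minFac with hq
    have hqp : q.Prime := Nat.minFac_prime hg
    have hqg : q ∣ g := Nat.minFac_dvd g
    have hqk : (q : ℤ) ∣ a + (k : ℤ) * b := dvd_trans (Int.ofNat_dvd.mpr hqg) (Int.gcd_dvd_left _ _)
    have hqD : q ∣ D := by
      have := dvd_trans (Int.ofNat_dvd.mpr hqg) (Int.gcd_dvd_right _ _ : _ ∣ ((D:ℕ) : ℤ))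
      exact_mod_cast this
    have hqDpf : q ∈ D.primeFactors := Nat.mem_primeFactors.mpr ⟨hqp, hqD, hD.ne'⟩
    by_cases hqb : (q : ℤ) ∣ b
    · have hqa : (q : ℤ) ∣ a := by
        have := dvd_sub hqk (Dvd.dvd.mul_left hqb (k : ℤ))
        simpa using this
      have := IsCoprime.isUnit_of_dvd' hab hqa hqb
      rw [Int.isUnit_iff] at this
      have := hqp.two_le
      omega
    · by_cases hqT : q ≤ T
      · have hqS₀ : q ∈ S₀ := by
          simp only [hS₀, Finset.mem_filter]
          exact ⟨hqDpf, hqT, hqb⟩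
        have hqP : (q : ℤ) ∣ (P : ℤ) := Int.ofNat_dvd.mpr (Finset.dvd_prod_of_mem _ hqS₀)
        have h1 : (q : ℤ) ∣ a + (k : ℤ) * b - 1 := dvd_trans hqP (hkey j)
        have : (q : ℤ) ∣ 1 := by
          have := dvd_sub hqk h1
          simpa using this
        have h2 := Int.isUnit_iff.mp (isUnit_of_dvd_one this)
        have := hqp.two_le
        omega
      · have hqS₁ : q ∈ S₁ := by
          simp only [hS₁, Finset.mem_filter]
          exact ⟨hqDpf, by omega, hqb⟩
        exact hgood q hqS₁ hqk

set_option maxHeartbeats 1000000 in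
/-- Jacobsthal-type lemma: for every ε > 0 there is C_ε > 0 such that for any
coprime integers a, b and any positive natural number D there is a natural
number k ≤ C_ε · D^ε with gcd(a + k·b, D) = 1. -/
theorem jacobsthal_coprime_shift :
    ∀ ε : ℝ, 0 < ε → ∃ C : ℝ, 0 < C ∧
      ∀ a b : ℤ, IsCoprime a b → ∀ D : ℕ, 0 < D →
        ∃ k : ℕ, 1 ≤ k ∧ (k : ℝ) ≤ C * (D : ℝ) ^ ε ∧
          Int.gcd (a + (k : ℤ) * b) (D : ℤ) = 1 := by
  intro ε hε
  set u₀ : ℝ := max 1 (8 * Real.log 2 / ε) with hu₀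
  set x₀ : ℝ := max (Real.exp u₀) 2 with hx₀
  set N₀ : ℕ := ⌈Real.exp x₀⌉₊ with hN₀
  refine ⟨((N₀ + 2) * 4 ^ N₀ : ℕ) + 40 / ε, by positivity, ?_⟩
  intro a b hab D hD
  have hD1 : (1 : ℝ) ≤ (D : ℝ) := by exact_mod_cast hD
  have hDε1 : (1 : ℝ) ≤ (D : ℝ) ^ ε := Real.one_le_rpow hD1 hε.le
  rcases le_or_gt (Real.log D) x₀ with hsmall | hlarge
  · -- small case : T = D
    have hDN : D ≤ N₀ := by
      have h1 : (D : ℝ) ≤ Real.exp x₀ := by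
        calc (D : ℝ) = Real.exp (Real.log D) := (Real.exp_log (by positivity)).symm
          _ ≤ Real.exp x₀ := Real.exp_le_exp.mpr hsmall
      exact_mod_cast h1.trans (Nat.le_ceil _)
    have hfil : ((D.primeFactors.filter (fun p => D < p)).card ≤ D) := by
      have : (D.primeFactors.filter (fun p => D < p)) = ∅ := by
        rw [Finset.filter_eq_empty_iff]
        intro p hp
        exact not_lt.mpr (Nat.le_of_dvd hD (Nat.dvd_of_mem_primeFactors hp))
      simp [this]
    obtain ⟨k, hk1, hk2, hk3⟩ := jac_core' D a b hab D hD hfil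
    refine ⟨k, hk1, ?_, hk3⟩
    have hkN : k ≤ (N₀ + 2) * 4 ^ N₀ :=
      hk2.trans (Nat.mul_le_mul (by omega) (Nat.pow_le_pow_right (by norm_num) hDN))
    calc (k : ℝ) ≤ ((N₀ + 2) * 4 ^ N₀ : ℕ) := by exact_mod_cast hkN
      _ ≤ ((N₀ + 2) * 4 ^ N₀ : ℕ) + 40 / ε := le_add_of_nonneg_right (by positivity)
      _ ≤ (((N₀ + 2) * 4 ^ N₀ : ℕ) + 40 / ε) * (D : ℝ) ^ ε := by
          nlinarith [hDε1, (by positivity : (0:ℝ) < ((N₀ + 2) * 4 ^ N₀ : ℕ) + 40 / ε)]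
  · -- large case
    set x : ℝ := Real.log D with hxdef
    have hx2 : (2 : ℝ) ≤ x := le_of_lt (lt_of_le_of_lt (le_max_right _ _) hlarge)
    have hxpos : (0 : ℝ) < x := by linarith
    set u : ℝ := Real.log x with hudef
    have hu1 : (1 : ℝ) ≤ u₀ := le_max_left _ _
    have huu₀ : u₀ ≤ u := by
      rw [hudef]
      calc u₀ = Real.log (Real.exp u₀) := (Real.log_exp _).symm
        _ ≤ Real.log x := Real.log_le_log (Real.exp_pos _) (le_trans (le_max_left _ _) hlarge.le)
    have hupos : (0 : ℝ) < u := by linarith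
    have hu8 : 8 * Real.log 2 / ε ≤ u := le_trans (le_max_right _ _) huu₀
    have hxD : x = Real.log D := hxdef
    clear_value x u
    set T : ℕ := ⌈2 * x / u⌉₊ with hT
    have hxu_pos : (0 : ℝ) < 2 * x / u := by positivity
    have hTge : 2 * x / u ≤ (T : ℝ) := Nat.le_ceil _
    have hTle : (T : ℝ) < 2 * x / u + 1 := Nat.ceil_lt_add_one hxu_pos.le
    have hT1 : 0 < T := Nat.ceil_pos.mpr hxu_pos
    clear_value T
    -- log (T+1) ≥ u / 2
    have hlogT : u / 2 ≤ Real.log ((T : ℝ) + 1) := by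
      have h1 : 2 * x / u ≤ (T : ℝ) + 1 := by linarith
      have h2 : Real.log (2 * x / u) ≤ Real.log ((T : ℝ) + 1) :=
        Real.log_le_log hxu_pos h1
      have h3 : Real.log (2 * x / u) = Real.log 2 + u - Real.log u := by
        rw [Real.log_div (by positivity) hupos.ne', Real.log_mul (by norm_num) hxpos.ne', ← hudef]
      have h4 : Real.log u ≤ u / 2 := log_le_half u hupos
      have h5 : (0:ℝ) < Real.log 2 := Real.log_pos (by norm_num)
      linarith
    -- card bound
    have hfil : ((D.primeFactors.filter (fun p => T < p)).card ≤ T) := by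
      set F := D.primeFactors.filter (fun p => T < p) with hF
      have h1 : (T + 1) ^ F.card ≤ ∏ p ∈ F, p := by
        apply Finset.pow_card_le_prod
        intro p hp
        have := (Finset.mem_filter.mp hp).2
        omega
      have h2 : (∏ p ∈ F, p) ∣ D := by
        apply dvd_trans _ (Nat.prod_primeFactors_dvd D)
        exact Finset.prod_dvd_prod_of_subset _ _ _ (Finset.filter_subset _ _)
      have h3 : (T + 1) ^ F.card ≤ D := h1.trans (Nat.le_of_dvd hD h2)
      have h4 : (D : ℝ) ≤ ((T : ℝ) + 1) ^ T := by
        have hx_le : x ≤ (T : ℝ) * Real.log ((T : ℝ) + 1) := by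
          calc x = (2 * x / u) * (u / 2) := by field_simp
            _ ≤ (T : ℝ) * Real.log ((T : ℝ) + 1) := by
                apply mul_le_mul hTge hlogT (by positivity) (by positivity)
        calc (D : ℝ) = Real.exp x := by rw [hxD]; exact (Real.exp_log (by positivity)).symm
          _ ≤ Real.exp ((T : ℝ) * Real.log ((T : ℝ) + 1)) := Real.exp_le_exp.mpr hx_le
          _ = ((T : ℝ) + 1) ^ (T : ℕ) := by
              rw [← Real.log_pow, Real.exp_log (by positivity)]
      have h5 : D ≤ (T + 1) ^ T := by exact_mod_cast h4
      have h6 : (T + 1) ^ F.card ≤ (T + 1) ^ T := h3.trans h5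
      exact (pow_le_pow_iff_right₀ (by omega : 1 < T + 1)).mp h6

    obtain ⟨k, hk1, hk2, hk3⟩ := jac_core' T a b hab D hD hfil
    refine ⟨k, hk1, ?_, hk3⟩
    -- real bound
    have hεx : (D : ℝ) ^ ε = Real.exp (ε * x) := by
      rw [Real.rpow_def_of_pos (by positivity), ← hxD]; ring_nf
    have hhalf : Real.exp (ε * x / 2) * Real.exp (ε * x / 2) = Real.exp (ε * x) := by
      rw [← Real.exp_add]; ring_nf
    have hb1 : (T : ℝ) + 2 ≤ 10 / ε * Real.exp (ε * x / 2) := by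
      have h1 : (T : ℝ) + 2 ≤ 2 * x / u + 3 := by linarith
      have h2 : 2 * x / u ≤ 2 * x := by
        rw [div_le_iff₀ hupos]
        nlinarith
      have h3 : (3 : ℝ) ≤ 3 * x / 2 := by linarith
      have h4 : (T : ℝ) + 2 ≤ 5 * x := by linarith
      have h5 : x ≤ 2 / ε * Real.exp (ε * x / 2) := by
        have := Real.add_one_le_exp (ε * x / 2)
        rw [div_mul_eq_mul_div, le_div_iff₀ hε]
        nlinarith [Real.exp_pos (ε * x / 2)]
      calc (T : ℝ) + 2 ≤ 5 * x := h4
        _ ≤ 5 * (2 / ε * Real.exp (ε * x / 2)) := by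
            apply mul_le_mul_of_nonneg_left h5 (by norm_num)
        _ = 10 / ε * Real.exp (ε * x / 2) := by ring
    have hb2 : (4 : ℝ) ^ T ≤ 4 * Real.exp (ε * x / 2) := by
      have h1 : (4 : ℝ) ^ T = Real.exp ((T : ℝ) * Real.log 4) := by
        rw [← Real.log_pow, Real.exp_log (by positivity)]
      have hlog4 : Real.log 4 = 2 * Real.log 2 := by
        rw [show (4:ℝ) = 2 ^ 2 by norm_num, Real.log_pow]; push_cast; ring
      have h2 : (T : ℝ) * Real.log 4 ≤ (2 * x / u + 1) * Real.log 4 := by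
        apply mul_le_mul_of_nonneg_right hTle.le
        rw [hlog4]; positivity
      have h3 : 2 * x / u * Real.log 4 ≤ ε * x / 2 := by
        rw [hlog4]
        have hu' : 8 * Real.log 2 ≤ ε * u := by
          rw [div_le_iff₀ hε] at hu8; linarith [hu8]
        rw [div_mul_eq_mul_div, div_le_iff₀ hupos]
        have hmul := mul_le_mul_of_nonneg_left hu' (le_of_lt hxpos)
        nlinarith [hmul]
      calc (4 : ℝ) ^ T = Real.exp ((T : ℝ) * Real.log 4) := h1
        _ ≤ Real.exp (ε * x / 2 + Real.log 4) := by
            apply Real.exp_le_exp.mpr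
            have : (2 * x / u + 1) * Real.log 4 = 2 * x / u * Real.log 4 + Real.log 4 := by ring
            linarith [h2, h3, this ▸ h2]
        _ = Real.exp (ε * x / 2) * 4 := by
            rw [Real.exp_add, Real.exp_log (by norm_num)]
        _ = 4 * Real.exp (ε * x / 2) := by ring
    have hbound : ((T + 2) * 4 ^ T : ℕ) ≤ (40 / ε) * (D : ℝ) ^ ε := by
      have hc : (((T + 2) * 4 ^ T : ℕ) : ℝ) = ((T : ℝ) + 2) * 4 ^ T := by push_cast; ring
      rw [hc, hεx, ← hhalf]
      calc ((T : ℝ) + 2) * 4 ^ T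
          ≤ (10 / ε * Real.exp (ε * x / 2)) * (4 * Real.exp (ε * x / 2)) := by
            apply mul_le_mul hb1 hb2 (by positivity) (by positivity)
        _ = 40 / ε * (Real.exp (ε * x / 2) * Real.exp (ε * x / 2)) := by ring
    calc (k : ℝ) ≤ (((T + 2) * 4 ^ T : ℕ) : ℝ) := Nat.cast_le.mpr hk2
      _ ≤ 40 / ε * (D : ℝ) ^ ε := hbound
      _ ≤ (((N₀ + 2) * 4 ^ N₀ : ℕ) + 40 / ε) * (D : ℝ) ^ ε := by
          apply mul_le_mul_of_nonneg_right _ (by positivity)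
          have : (0:ℝ) ≤ ((N₀ + 2) * 4 ^ N₀ : ℕ) := by positivity
          linarith
end

section
/- For every ε > 0 there is a constant C_ε > 0 with the following property: for any real number x and any natural number D, either (i) there is an integer c with |x − c| ≤ 1/(2(1 + C_ε D^ε)), or (ii) there exist a natural number b ≤ 2(1 + C_ε D^ε)² and an integer a with gcd(a, b·D) = 1 such that |b·x − a| ≤ 1/2. -/
open Finset

/-- CRT-type avoidance: for a finset of primes, find `k ≤ ∏ S` with `u + k*v` not
divisible by any prime in `S`, given `IsCoprime u v`. -/
lemma crt_avoid (S : Finset ℕ) (hS : ∀ ℓ ∈ S, ℓ.Prime) (u v : ℤ) (huv : IsCoprime u v) :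
    ∃ k : ℕ, k ≤ ∏ ℓ ∈ S, ℓ ∧ ∀ ℓ ∈ S, ¬ ((ℓ : ℤ) ∣ u + k * v) := by
  classical
  induction S using Finset.induction_on with
  | empty => exact ⟨0, by simp, by simp⟩
  | @insert ℓ S hℓS ih =>
    obtain ⟨k, hk, hgood⟩ := ih (fun ℓ' h => hS ℓ' (Finset.mem_insert_of_mem h))
    have hℓp : ℓ.Prime := hS ℓ (Finset.mem_insert_self _ _)
    set M : ℕ := ∏ ℓ' ∈ S, ℓ'
    have hMpos : 1 ≤ M := Finset.one_le_prod' (fun ℓ' h => (hS ℓ' (Finset.mem_insert_of_mem h)).one_lt.le)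
    have hℓM : ¬ (ℓ : ℤ) ∣ (M : ℤ) := by
      rw [Int.natCast_dvd_natCast]
      intro hd
      obtain ⟨ℓ', hℓ', hdd⟩ := (Prime.dvd_finset_prod_iff hℓp.prime _).mp hd
      have := (Nat.prime_dvd_prime_iff_eq hℓp (hS ℓ' (Finset.mem_insert_of_mem hℓ'))).mp hdd
      exact hℓS (this ▸ hℓ')
    -- keep residues mod primes of S when adding multiples of M
    have hkeep : ∀ (t : ℕ) (ℓ' : ℕ), ℓ' ∈ S → ¬ ((ℓ' : ℤ) ∣ u + ((k + t * M : ℕ) : ℤ) * v) := by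
      intro t ℓ' hℓ' hdvd
      apply hgood ℓ' hℓ'
      have hM : (ℓ' : ℤ) ∣ ((t * M : ℕ) : ℤ) := by
        exact_mod_cast Int.natCast_dvd_natCast.mpr (Dvd.dvd.mul_left (Finset.dvd_prod_of_mem _ hℓ') t)
      have : u + ((k + t * M : ℕ) : ℤ) * v = (u + (k : ℤ) * v) + ((t * M : ℕ) : ℤ) * v := by
        push_cast; ring
      rw [this] at hdvd
      exact (dvd_add_right (hM.mul_right v)).mp (by rwa [add_comm] at hdvd)
    by_cases hv : (ℓ : ℤ) ∣ v
    · -- ℓ ∤ u, so any t works; take t = 0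
      refine ⟨k, ?_, ?_⟩
      · calc k ≤ M := hk
          _ ≤ ℓ * M := Nat.le_mul_of_pos_left M hℓp.pos
          _ = ∏ ℓ' ∈ insert ℓ S, ℓ' := (Finset.prod_insert (f := fun x => x) hℓS).symm
      · intro ℓ' hℓ'
        rcases Finset.mem_insert.mp hℓ' with rfl | h
        · intro hdvd
          have hu : (ℓ' : ℤ) ∣ u := (dvd_add_right (hv.mul_left _)).mp (by rwa [add_comm] at hdvd)
          exact hℓp.one_lt.ne' (Int.isUnit_iff.mp (huv.isUnit_of_dvd' hu hv) |>.elim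
            (fun h => by exact_mod_cast h) (fun h => by omega))
        · exact hgood ℓ' h
    · -- choose t ∈ {0,1}
      have hMv : ¬ (ℓ : ℤ) ∣ (M : ℤ) * v := fun hd => (((Nat.prime_iff_prime_int.mp hℓp).dvd_mul.mp hd).elim hℓM hv)
      have key : ∃ t : ℕ, t ≤ 1 ∧ ¬ ((ℓ : ℤ) ∣ u + ((k + t * M : ℕ) : ℤ) * v) := by
        by_cases h0 : (ℓ : ℤ) ∣ u + (k : ℤ) * v
        · refine ⟨1, le_refl _, fun h1 => hMv ?_⟩
          have : u + ((k + 1 * M : ℕ) : ℤ) * v - (u + (k : ℤ) * v) = (M : ℤ) * v := by push_cast; ring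
          exact this ▸ dvd_sub h1 h0
        · exact ⟨0, zero_le_one, by simpa using h0⟩
      obtain ⟨t, ht1, ht⟩ := key
      refine ⟨k + t * M, ?_, ?_⟩
      · have : k + t * M ≤ M + 1 * M := by
          have := Nat.mul_le_mul_right M ht1; omega
        calc k + t * M ≤ 2 * M := by omega
          _ ≤ ℓ * M := Nat.mul_le_mul_right M hℓp.two_le
          _ = ∏ ℓ' ∈ insert ℓ S, ℓ' := (Finset.prod_insert (f := fun x => x) hℓS).symm
      · intro ℓ' hℓ'
        rcases Finset.mem_insert.mp hℓ' with rfl | h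
        · exact ht
        · exact hkeep t ℓ' h


lemma jacobsthal_core (T D : ℕ) (hD : 0 < D) (u v : ℤ) (huv : IsCoprime u v)
    (hm : (D.primeFactors.filter (fun ℓ => T < ℓ)).card ≤ T) :
    ∃ k : ℕ, 1 ≤ k ∧ k ≤ 4 ^ T * ((T + 1) * (T + 2)) ∧ Int.gcd (u + k * v) D = 1 := by
  classical
  set Ssmall := D.primeFactors.filter (fun ℓ => ℓ ≤ T) with hSsmall
  set Sbig := D.primeFactors.filter (fun ℓ => T < ℓ) with hSbig
  set m := Sbig.card with hmdef
  have hprime : ∀ ℓ ∈ D.primeFactors, ℓ.Prime := fun ℓ h => Nat.prime_of_mem_primeFactors h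
  obtain ⟨k₀, hk₀le, hk₀⟩ := crt_avoid Ssmall
    (fun ℓ h => hprime ℓ (Finset.mem_filter.mp h).1) u v huv
  set P := ∏ ℓ ∈ Ssmall, ℓ with hPdef
  have hP1 : 1 ≤ P := Finset.one_le_prod' (fun ℓ h => (hprime ℓ (Finset.mem_filter.mp h).1).one_lt.le)
  have hP4T : P ≤ 4 ^ T := by
    calc P ≤ ∏ ℓ ∈ (Finset.range (T + 1)).filter Nat.Prime, ℓ := by
          apply Finset.prod_le_prod_of_subset_of_one_le'
          · intro ℓ h
            rw [Finset.mem_filter] at h ⊢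
            exact ⟨Finset.mem_range.mpr (Nat.lt_succ_of_le h.2), hprime ℓ h.1⟩
          · intro ℓ h _
            exact ((Finset.mem_filter.mp h).2).one_lt.le
      _ = primorial T := rfl
      _ ≤ 4 ^ T := primorial_le_4_pow T
  -- small primes stay avoided when adding multiples of P
  have hsmall : ∀ (j : ℕ) (ℓ : ℕ), ℓ ∈ Ssmall → ¬ ((ℓ : ℤ) ∣ u + ((k₀ + j * P : ℕ) : ℤ) * v) := by
    intro j ℓ hℓ hdvd
    apply hk₀ ℓ hℓ
    have hℓP : (ℓ : ℤ) ∣ ((j * P : ℕ) : ℤ) :=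
      Int.natCast_dvd_natCast.mpr ((Finset.dvd_prod_of_mem _ hℓ).mul_left j)
    have heq : u + ((k₀ + j * P : ℕ) : ℤ) * v = (u + (k₀ : ℤ) * v) + ((j * P : ℕ) : ℤ) * v := by
      push_cast; ring
    rw [heq] at hdvd
    exact (dvd_add_right (hℓP.mul_right v)).mp (by rwa [add_comm] at hdvd)
  set J := (m + 1) * (T + 1) with hJdef
  -- find a good j
  have hgoodj : ∃ j ∈ Finset.Icc 1 J, ∀ ℓ ∈ Sbig, ¬ ((ℓ : ℤ) ∣ u + ((k₀ + j * P : ℕ) : ℤ) * v) := by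
    by_contra hcon
    push_neg at hcon
    have hsub : Finset.Icc 1 J ⊆ Sbig.biUnion (fun ℓ =>
        (Finset.Icc 1 J).filter (fun j => (ℓ : ℤ) ∣ u + ((k₀ + j * P : ℕ) : ℤ) * v)) := by
      intro j hj
      obtain ⟨ℓ, hℓ, hd⟩ := hcon j hj
      exact Finset.mem_biUnion.mpr ⟨ℓ, hℓ, Finset.mem_filter.mpr ⟨hj, hd⟩⟩
    have hcard : J ≤ m * (m + 1) := by
      calc J = (Finset.Icc 1 J).card := by rw [Nat.card_Icc]; omega
        _ ≤ _ := Finset.card_le_card hsub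
        _ ≤ Sbig.sum (fun ℓ => ((Finset.Icc 1 J).filter
              (fun j => (ℓ : ℤ) ∣ u + ((k₀ + j * P : ℕ) : ℤ) * v)).card) := Finset.card_biUnion_le
        _ ≤ Sbig.sum (fun _ => m + 1) := by
            apply Finset.sum_le_sum
            intro ℓ hℓ
            obtain ⟨hℓD, hℓT⟩ := Finset.mem_filter.mp hℓ
            have hℓp := hprime ℓ hℓD
            set Bad := (Finset.Icc 1 J).filter
              (fun j => (ℓ : ℤ) ∣ u + ((k₀ + j * P : ℕ) : ℤ) * v) with hBad
            by_cases hv : (ℓ : ℤ) ∣ v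
            · have : Bad = ∅ := by
                rw [Finset.eq_empty_iff_forall_notMem]
                intro j hj
                have hd := (Finset.mem_filter.mp hj).2
                have hu : (ℓ : ℤ) ∣ u := (dvd_add_right (hv.mul_left _)).mp (by rwa [add_comm] at hd)
                exact hℓp.one_lt.ne' (Int.isUnit_iff.mp (huv.isUnit_of_dvd' hu hv) |>.elim
                  (fun h => by exact_mod_cast h) (fun h => by omega))
              simp [this]
            · -- injective map j ↦ (j-1)/ℓ into range ((J-1)/ℓ + 1)
              have hℓP : ¬ ((ℓ : ℤ) ∣ (P : ℤ)) := by
                rw [Int.natCast_dvd_natCast]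
                intro hdP
                obtain ⟨ℓ', hℓ', hdd⟩ := (Prime.dvd_finset_prod_iff hℓp.prime _).mp hdP
                have h1 := Finset.mem_filter.mp hℓ'
                have := (Nat.prime_dvd_prime_iff_eq hℓp (hprime ℓ' h1.1)).mp hdd
                omega
              have hinj : ∀ j ∈ Bad, ∀ j' ∈ Bad, (j - 1) / ℓ = (j' - 1) / ℓ → j = j' := by
                intro j hj j' hj' hq
                obtain ⟨hjI, hjd⟩ := Finset.mem_filter.mp hj
                obtain ⟨hjI', hjd'⟩ := Finset.mem_filter.mp hj'
                rw [Finset.mem_Icc] at hjI hjI'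
                -- ℓ divides (j - j') * (P * v)
                rcases le_total j' j with hle | hle
                · have hdiff : (ℓ : ℤ) ∣ ((j - j' : ℕ) : ℤ) * ((P : ℤ) * v) := by
                    have : ((j - j' : ℕ) : ℤ) * ((P : ℤ) * v) =
                        (u + ((k₀ + j * P : ℕ) : ℤ) * v) - (u + ((k₀ + j' * P : ℕ) : ℤ) * v) := by
                      push_cast [hle]; ring
                    rw [this]; exact dvd_sub hjd hjd'
                  have hdj : ℓ ∣ (j - j') := by
                    rcases (Nat.prime_iff_prime_int.mp hℓp).dvd_mul.mp hdiff with h | h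
                    · exact_mod_cast h
                    · rcases (Nat.prime_iff_prime_int.mp hℓp).dvd_mul.mp h with h' | h'
                      · exact absurd h' hℓP
                      · exact absurd h' hv
                  obtain ⟨t, ht⟩ := hdj
                  have hj1 : j - 1 = (j' - 1) + ℓ * t := by omega
                  rw [hj1, Nat.add_mul_div_left _ _ hℓp.pos] at hq
                  have ht0 : t = 0 := by omega
                  rw [ht0, Nat.mul_zero] at ht
                  omega
                · have hdiff : (ℓ : ℤ) ∣ ((j' - j : ℕ) : ℤ) * ((P : ℤ) * v) := by
                    have : ((j' - j : ℕ) : ℤ) * ((P : ℤ) * v) =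
                        (u + ((k₀ + j' * P : ℕ) : ℤ) * v) - (u + ((k₀ + j * P : ℕ) : ℤ) * v) := by
                      push_cast [hle]; ring
                    rw [this]; exact dvd_sub hjd' hjd
                  have hdj : ℓ ∣ (j' - j) := by
                    rcases (Nat.prime_iff_prime_int.mp hℓp).dvd_mul.mp hdiff with h | h
                    · exact_mod_cast h
                    · rcases (Nat.prime_iff_prime_int.mp hℓp).dvd_mul.mp h with h' | h'
                      · exact absurd h' hℓP
                      · exact absurd h' hv
                  obtain ⟨t, ht⟩ := hdj
                  have hj1 : j' - 1 = (j - 1) + ℓ * t := by omega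
                  rw [hj1, Nat.add_mul_div_left _ _ hℓp.pos] at hq
                  have ht0 : t = 0 := by omega
                  rw [ht0, Nat.mul_zero] at ht
                  omega
              have hmap : ∀ j ∈ Bad, (j - 1) / ℓ ∈ Finset.range (m + 1) := by
                intro j hj
                obtain ⟨hjI, _⟩ := Finset.mem_filter.mp hj
                rw [Finset.mem_Icc] at hjI
                rw [Finset.mem_range]
                have h1 : (j - 1) / ℓ ≤ (J - 1) / ℓ := Nat.div_le_div_right (by omega)
                have h2 : (J - 1) / ℓ ≤ (J - 1) / (T + 1) := Nat.div_le_div_left hℓT (by omega)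
                have h3 : (J - 1) / (T + 1) ≤ m := by
                  rw [Nat.div_le_iff_le_mul_add_pred (by omega)]
                  have hexp : (m + 1) * (T + 1) = (T + 1) * m + (T + 1) := by ring
                  omega
                omega
              calc Bad.card ≤ (Finset.range (m + 1)).card :=
                    Finset.card_le_card_of_injOn _ hmap hinj
                _ = m + 1 := Finset.card_range _
        _ = m * (m + 1) := by rw [Finset.sum_const, smul_eq_mul, hmdef]
    have h1 : (m + 1) * (T + 1) ≤ m * (m + 1) := hJdef ▸ hcard
    nlinarith [h1, hm]
  obtain ⟨j, hjI, hjgood⟩ := hgoodj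
  rw [Finset.mem_Icc] at hjI
  refine ⟨k₀ + j * P, by have := Nat.mul_le_mul hjI.1 hP1; omega, ?_, ?_⟩
  · have hmT : m ≤ T := hm
    have hstep : j * P ≤ J * P := Nat.mul_le_mul_right P hjI.2
    have h1 : k₀ + j * P ≤ (J + 1) * P :=
      calc k₀ + j * P ≤ P + J * P := add_le_add hk₀le hstep
        _ = (J + 1) * P := by ring
    have h2 : (J + 1) * P ≤ (J + 1) * 4 ^ T := Nat.mul_le_mul_left _ hP4T
    have h3 : J + 1 ≤ (T + 1) * (T + 2) := by
      have hJle : J ≤ (T + 1) * (T + 1) := by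
        rw [hJdef]; exact Nat.mul_le_mul_right _ (by omega)
      nlinarith
    calc k₀ + j * P ≤ (J + 1) * 4 ^ T := le_trans h1 h2
      _ ≤ ((T + 1) * (T + 2)) * 4 ^ T := Nat.mul_le_mul_right _ h3
      _ = 4 ^ T * ((T + 1) * (T + 2)) := by ring
  · by_contra hg
    set g := Int.gcd (u + ((k₀ + j * P : ℕ) : ℤ) * v) (D : ℤ) with hgdef
    have hgD : g ∣ D := by
      have : (↑(Int.gcd (u + ((k₀ + j * P : ℕ) : ℤ) * v) (D : ℤ)) : ℤ) ∣ (D : ℤ) := Int.gcd_dvd_right _ _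
      exact_mod_cast this
    have hg0 : g ≠ 0 := by
      intro h0
      rw [h0] at hgD
      omega
    have hg2 : 2 ≤ g := by omega
    set ℓ := g.minFac with hℓdef
    have hℓp : ℓ.Prime := Nat.minFac_prime (by omega)
    have hℓD : ℓ ∣ D := (Nat.minFac_dvd g).trans hgD
    have hℓa : (ℓ : ℤ) ∣ u + ((k₀ + j * P : ℕ) : ℤ) * v := by
      have h1 : (ℓ : ℤ) ∣ (g : ℤ) := Int.natCast_dvd_natCast.mpr (Nat.minFac_dvd g)
      exact h1.trans (Int.gcd_dvd_left _ _)
    have hℓmem : ℓ ∈ D.primeFactors := Nat.mem_primeFactors.mpr ⟨hℓp, hℓD, by omega⟩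
    rcases le_or_gt ℓ T with hle | hlt
    · exact hsmall j ℓ (Finset.mem_filter.mpr ⟨hℓmem, hle⟩) hℓa
    · exact hjgood ℓ (Finset.mem_filter.mpr ⟨hℓmem, hlt⟩) hℓa

lemma log_le_rpow_div {x δ : ℝ} (hx : 1 ≤ x) (hδ : 0 < δ) : Real.log x ≤ x ^ δ / δ := by
  have hx0 : 0 < x := lt_of_lt_of_le one_pos hx
  have h1 : δ * Real.log x = Real.log (x ^ δ) := (Real.log_rpow hx0 δ).symm
  have h2 : Real.log (x ^ δ) ≤ x ^ δ - 1 := Real.log_le_sub_one_of_pos (Real.rpow_pos_of_pos hx0 δ)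
  have h3 : δ * Real.log x ≤ x ^ δ := by linarith [h1, h2]
  calc Real.log x = (δ * Real.log x) / δ := by field_simp
    _ ≤ x ^ δ / δ := by gcongr

lemma jacobsthal (ε : ℝ) (hε : 0 < ε) : ∃ C : ℝ, 0 < C ∧
    ∀ (u v : ℤ) (D : ℕ), 0 < D → IsCoprime u v →
      ∃ k : ℕ, 1 ≤ k ∧ (k : ℝ) ≤ C * (D : ℝ) ^ ε ∧ Int.gcd (u + (k : ℤ) * v) (D : ℤ) = 1 := by
  have hlog4 : 0 < Real.log 4 := Real.log_pos (by norm_num)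
  set c : ℝ := ε / (4 * Real.log 4) with hc
  have hcpos : 0 < c := by positivity
  set D₀ : ℝ := Real.exp (max (2 / c) (Real.exp (2 / c) / c)) with hD₀
  have hD₀pos : 0 < D₀ := Real.exp_pos _
  have hD₀1 : 1 ≤ D₀ := by
    rw [hD₀]
    rw [Real.one_le_exp_iff]
    have : 0 < 2 / c := by positivity
    exact le_trans this.le (le_max_left _ _)
  set C₁ : ℝ := (4 : ℝ) ^ D₀ * ((D₀ + 1) * (D₀ + 2)) with hC₁
  have hC₁pos : 0 < C₁ := by
    apply mul_pos (Real.rpow_pos_of_pos (by norm_num) _)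
    nlinarith
  set C₂ : ℝ := (8 * c / ε + 1) * (8 * c / ε + 2) with hC₂
  have hC₂pos : 0 < C₂ := by positivity
  refine ⟨C₁ + C₂, by positivity, ?_⟩
  intro u v D hD huv
  have hD1 : (1 : ℝ) ≤ (D : ℝ) := by exact_mod_cast hD
  have hDrpow1 : (1 : ℝ) ≤ (D : ℝ) ^ ε := Real.one_le_rpow hD1 hε.le
  rcases le_or_gt (D : ℝ) D₀ with hcase | hcase
  · -- small D: use T = D
    have hmT : ((D.primeFactors.filter (fun ℓ => D < ℓ)).card ≤ D) := by
      have : D.primeFactors.filter (fun ℓ => D < ℓ) = ∅ := by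
        rw [Finset.eq_empty_iff_forall_notMem]
        intro ℓ hℓ
        rw [Finset.mem_filter] at hℓ
        have := Nat.le_of_dvd hD (Nat.dvd_of_mem_primeFactors hℓ.1)
        omega
      rw [this]; simp
    obtain ⟨k, hk1, hkle, hkgcd⟩ := jacobsthal_core D D hD u v huv hmT
    refine ⟨k, hk1, ?_, hkgcd⟩
    have hkle' : (k : ℝ) ≤ (4 : ℝ) ^ (D : ℕ) * (((D : ℝ) + 1) * ((D : ℝ) + 2)) := by
      have := hkle
      have hcast : ((4 ^ D * ((D + 1) * (D + 2)) : ℕ) : ℝ)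
          = (4 : ℝ) ^ (D : ℕ) * (((D : ℝ) + 1) * ((D : ℝ) + 2)) := by push_cast; ring
      calc (k : ℝ) ≤ ((4 ^ D * ((D + 1) * (D + 2)) : ℕ) : ℝ) := by exact_mod_cast hkle
        _ = _ := hcast
    have h4D : (4 : ℝ) ^ (D : ℕ) ≤ (4 : ℝ) ^ D₀ := by
      rw [← Real.rpow_natCast 4 D]
      exact Real.rpow_le_rpow_of_exponent_le (by norm_num) hcase
    have hfac : ((D : ℝ) + 1) * ((D : ℝ) + 2) ≤ (D₀ + 1) * (D₀ + 2) := by nlinarith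
    have : (k : ℝ) ≤ C₁ := by
      calc (k : ℝ) ≤ (4 : ℝ) ^ (D : ℕ) * (((D : ℝ) + 1) * ((D : ℝ) + 2)) := hkle'
        _ ≤ (4 : ℝ) ^ D₀ * ((D₀ + 1) * (D₀ + 2)) := by
            apply mul_le_mul h4D hfac (by nlinarith) (Real.rpow_pos_of_pos (by norm_num) _).le
        _ = C₁ := rfl
    calc (k : ℝ) ≤ C₁ := this
      _ = C₁ * 1 := (mul_one _).symm
      _ ≤ (C₁ + C₂) * ((D : ℝ) ^ ε) := by
          apply mul_le_mul (by linarith) hDrpow1 one_pos.le (by positivity)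
  · -- large D
    have hlogD : Real.log D₀ < Real.log (D : ℝ) := Real.log_lt_log hD₀pos hcase
    have hlogD₀ : Real.log D₀ = max (2 / c) (Real.exp (2 / c) / c) := by
      rw [hD₀, Real.log_exp]
    have hld1 : 2 / c ≤ Real.log (D : ℝ) := by
      rw [hlogD₀] at hlogD
      exact le_trans (le_max_left _ _) hlogD.le
    have hld2 : Real.exp (2 / c) / c ≤ Real.log (D : ℝ) := by
      rw [hlogD₀] at hlogD
      exact le_trans (le_max_right _ _) hlogD.le
    have hlogDpos : 0 < Real.log (D : ℝ) := by
      have : 0 < 2 / c := by positivity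
      linarith
    set T : ℕ := ⌊c * Real.log (D : ℝ)⌋₊ with hT
    have hclog : 0 ≤ c * Real.log (D : ℝ) := by positivity
    have hTle : (T : ℝ) ≤ c * Real.log (D : ℝ) := Nat.floor_le hclog
    have hTgt : c * Real.log (D : ℝ) < (T : ℝ) + 1 := Nat.lt_floor_add_one _
    have hclog2 : Real.exp (2 / c) ≤ c * Real.log (D : ℝ) := by
      rw [div_le_iff₀ hcpos] at hld2
      linarith [hld2]
    have hT1 : 1 ≤ T := by
      have h1 : (1 : ℝ) ≤ Real.exp (2 / c) := Real.one_le_exp (by positivity)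
      have : (1 : ℝ) ≤ c * Real.log (D : ℝ) := le_trans h1 hclog2
      exact Nat.le_floor (by exact_mod_cast this)
    -- m ≤ T
    have hmT : ((D.primeFactors.filter (fun ℓ => T < ℓ)).card ≤ T) := by
      set Sbig := D.primeFactors.filter (fun ℓ => T < ℓ) with hSbig
      set m := Sbig.card with hm
      have hpow : (T + 1) ^ m ≤ D := by
        have h1 : (T + 1) ^ m ≤ ∏ ℓ ∈ Sbig, ℓ := by
          rw [← Finset.prod_const]
          apply Finset.prod_le_prod'
          intro ℓ hℓ
          have := (Finset.mem_filter.mp hℓ).2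
          omega
        have h2 : (∏ ℓ ∈ Sbig, ℓ) ∣ D := by
          apply dvd_trans _ (Nat.prod_primeFactors_dvd D)
          exact Finset.prod_dvd_prod_of_subset _ _ _ (Finset.filter_subset _ _)
        exact le_trans h1 (Nat.le_of_dvd hD h2)
      -- real log argument
      have hT1r : (2 : ℝ) ≤ (T : ℝ) + 1 := by
        have : (1 : ℝ) ≤ (T : ℝ) := by exact_mod_cast hT1
        linarith
      have hlogT : 0 < Real.log ((T : ℝ) + 1) := Real.log_pos (by linarith)
      have hmlog : (m : ℝ) * Real.log ((T : ℝ) + 1) ≤ Real.log (D : ℝ) := by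
        have h1 : ((T + 1 : ℕ) : ℝ) ^ (m : ℕ) ≤ (D : ℝ) := by exact_mod_cast hpow
        have h2 : Real.log (((T + 1 : ℕ) : ℝ) ^ (m : ℕ)) ≤ Real.log (D : ℝ) :=
          Real.log_le_log (by positivity) h1
        rw [Real.log_pow] at h2
        push_cast at h2 ⊢
        linarith
      -- log (T+1) ≥ 2/c
      have hlogT2 : 2 / c ≤ Real.log ((T : ℝ) + 1) := by
        have h1 : Real.exp (2 / c) ≤ (T : ℝ) + 1 := le_trans hclog2 hTgt.le
        calc 2 / c = Real.log (Real.exp (2 / c)) := (Real.log_exp _).symm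
          _ ≤ Real.log ((T : ℝ) + 1) := Real.log_le_log (Real.exp_pos _) h1
      have hmr : (m : ℝ) ≤ (c / 2) * Real.log (D : ℝ) := by
        have h1 : (m : ℝ) * (2 / c) ≤ (m : ℝ) * Real.log ((T : ℝ) + 1) := by
          apply mul_le_mul_of_nonneg_left hlogT2 (Nat.cast_nonneg m)
        have h2 : (m : ℝ) * (2 / c) ≤ Real.log (D : ℝ) := le_trans h1 hmlog
        have h4 := mul_le_mul_of_nonneg_left h2 (by positivity : (0:ℝ) ≤ c / 2)
        have h3 : (c / 2) * ((m : ℝ) * (2 / c)) = (m : ℝ) := by field_simp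
        linarith
      have hfin : (m : ℝ) ≤ (T : ℝ) := by
        have h1 : (c / 2) * Real.log (D : ℝ) ≤ ((T : ℝ) + 1) / 2 := by linarith
        have h2 : ((T : ℝ) + 1) / 2 ≤ (T : ℝ) := by
          have : (1 : ℝ) ≤ (T : ℝ) := by exact_mod_cast hT1
          linarith
        linarith
      exact_mod_cast hfin
    obtain ⟨k, hk1, hkle, hkgcd⟩ := jacobsthal_core T D hD u v huv hmT
    refine ⟨k, hk1, ?_, hkgcd⟩
    -- bound k in reals
    have hkler : (k : ℝ) ≤ (4 : ℝ) ^ (T : ℕ) * (((T : ℝ) + 1) * ((T : ℝ) + 2)) := by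
      calc (k : ℝ) ≤ ((4 ^ T * ((T + 1) * (T + 2)) : ℕ) : ℝ) := by exact_mod_cast hkle
        _ = (4 : ℝ) ^ (T : ℕ) * (((T : ℝ) + 1) * ((T : ℝ) + 2)) := by push_cast; ring
    have h4T : (4 : ℝ) ^ (T : ℕ) ≤ (D : ℝ) ^ (ε / 4) := by
      rw [← Real.rpow_natCast 4 T]
      have h1 : (4 : ℝ) ^ (T : ℝ) ≤ (4 : ℝ) ^ (c * Real.log (D : ℝ)) :=
        Real.rpow_le_rpow_of_exponent_le (by norm_num) hTle
      have h2 : (4 : ℝ) ^ (c * Real.log (D : ℝ)) = (D : ℝ) ^ (ε / 4) := by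
        rw [Real.rpow_def_of_pos (by norm_num : (0:ℝ) < 4),
            Real.rpow_def_of_pos (by linarith : (0:ℝ) < (D : ℝ))]
        congr 1
        rw [hc]
        field_simp
      rw [h2] at h1; exact h1
    have hlogbound : Real.log (D : ℝ) ≤ (8 / ε) * (D : ℝ) ^ (ε / 8) := by
      have := log_le_rpow_div hD1 (show (0:ℝ) < ε / 8 by positivity)
      calc Real.log (D : ℝ) ≤ (D : ℝ) ^ (ε / 8) / (ε / 8) := this
        _ = (8 / ε) * (D : ℝ) ^ (ε / 8) := by field_simp
    have hrpow8 : (1 : ℝ) ≤ (D : ℝ) ^ (ε / 8) := Real.one_le_rpow hD1 (by positivity)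
    have hTb1 : (T : ℝ) + 1 ≤ (8 * c / ε + 1) * (D : ℝ) ^ (ε / 8) := by
      have h1 : (T : ℝ) ≤ c * ((8 / ε) * (D : ℝ) ^ (ε / 8)) := by
        calc (T : ℝ) ≤ c * Real.log (D : ℝ) := hTle
          _ ≤ c * ((8 / ε) * (D : ℝ) ^ (ε / 8)) := by
              apply mul_le_mul_of_nonneg_left hlogbound hcpos.le
      have h2 : c * ((8 / ε) * (D : ℝ) ^ (ε / 8)) = (8 * c / ε) * (D : ℝ) ^ (ε / 8) := by ring
      have h3 : (8 * c / ε + 1) * (D : ℝ) ^ (ε / 8)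
          = (8 * c / ε) * (D : ℝ) ^ (ε / 8) + (D : ℝ) ^ (ε / 8) := by ring
      linarith
    have hTb2 : (T : ℝ) + 2 ≤ (8 * c / ε + 2) * (D : ℝ) ^ (ε / 8) := by
      have h1 : (T : ℝ) ≤ c * ((8 / ε) * (D : ℝ) ^ (ε / 8)) := by
        calc (T : ℝ) ≤ c * Real.log (D : ℝ) := hTle
          _ ≤ c * ((8 / ε) * (D : ℝ) ^ (ε / 8)) := by
              apply mul_le_mul_of_nonneg_left hlogbound hcpos.le
      have h2 : c * ((8 / ε) * (D : ℝ) ^ (ε / 8)) = (8 * c / ε) * (D : ℝ) ^ (ε / 8) := by ring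
      have h3 : (8 * c / ε + 2) * (D : ℝ) ^ (ε / 8)
          = (8 * c / ε) * (D : ℝ) ^ (ε / 8) + 2 * (D : ℝ) ^ (ε / 8) := by ring
      linarith
    have hTpos1 : (0 : ℝ) ≤ (T : ℝ) + 1 := by positivity
    have hTpos2 : (0 : ℝ) ≤ (T : ℝ) + 2 := by positivity
    have hprod : ((T : ℝ) + 1) * ((T : ℝ) + 2) ≤ C₂ * (D : ℝ) ^ (ε / 4) := by
      have h1 : ((T : ℝ) + 1) * ((T : ℝ) + 2)
          ≤ ((8 * c / ε + 1) * (D : ℝ) ^ (ε / 8)) * ((8 * c / ε + 2) * (D : ℝ) ^ (ε / 8)) :=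
        mul_le_mul hTb1 hTb2 hTpos2 (by positivity)
      have h2 : ((8 * c / ε + 1) * (D : ℝ) ^ (ε / 8)) * ((8 * c / ε + 2) * (D : ℝ) ^ (ε / 8))
          = C₂ * ((D : ℝ) ^ (ε / 8) * (D : ℝ) ^ (ε / 8)) := by rw [hC₂]; ring
      have h3 : (D : ℝ) ^ (ε / 8) * (D : ℝ) ^ (ε / 8) = (D : ℝ) ^ (ε / 4) := by
        rw [← Real.rpow_add (by linarith : (0:ℝ) < (D:ℝ)), show ε / 8 + ε / 8 = ε / 4 by ring]
      calc ((T : ℝ) + 1) * ((T : ℝ) + 2) ≤ _ := h1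
        _ = C₂ * ((D : ℝ) ^ (ε / 8) * (D : ℝ) ^ (ε / 8)) := h2
        _ = C₂ * (D : ℝ) ^ (ε / 4) := by rw [h3]
    have hfinal : (k : ℝ) ≤ C₂ * (D : ℝ) ^ ε := by
      have h1 : (k : ℝ) ≤ (D : ℝ) ^ (ε / 4) * (C₂ * (D : ℝ) ^ (ε / 4)) := by
        calc (k : ℝ) ≤ (4 : ℝ) ^ (T : ℕ) * (((T : ℝ) + 1) * ((T : ℝ) + 2)) := hkler
          _ ≤ (D : ℝ) ^ (ε / 4) * (C₂ * (D : ℝ) ^ (ε / 4)) := by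
              apply mul_le_mul h4T hprod (by positivity) (by positivity)
      have h2 : (D : ℝ) ^ (ε / 4) * (C₂ * (D : ℝ) ^ (ε / 4)) = C₂ * (D : ℝ) ^ (ε / 2) := by
        rw [show (D : ℝ) ^ (ε/4) * (C₂ * (D : ℝ) ^ (ε/4)) = C₂ * ((D : ℝ) ^ (ε/4) * (D : ℝ) ^ (ε/4)) by ring,
            ← Real.rpow_add (by linarith : (0:ℝ) < (D:ℝ)), show ε / 4 + ε / 4 = ε / 2 by ring]
      have h3 : (D : ℝ) ^ (ε / 2) ≤ (D : ℝ) ^ ε :=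
        Real.rpow_le_rpow_of_exponent_le hD1 (by linarith)
      calc (k : ℝ) ≤ C₂ * (D : ℝ) ^ (ε / 2) := by linarith [h1, h2.le]
        _ ≤ C₂ * (D : ℝ) ^ ε := by apply mul_le_mul_of_nonneg_left h3 hC₂pos.le
    calc (k : ℝ) ≤ C₂ * (D : ℝ) ^ ε := hfinal
      _ ≤ (C₁ + C₂) * (D : ℝ) ^ ε := by
          apply mul_le_mul_of_nonneg_right (by linarith) (by positivity)


lemma exists_adjacent (p q : ℤ) (hq : 0 < q) (hcop : Int.gcd p q = 1)
    (d : ℤ) (hd : d = 1 ∨ d = -1) :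
    ∃ p'' q'' : ℤ, 0 ≤ q'' ∧ q'' < q ∧ p * q'' - p'' * q = d ∧ IsCoprime p'' p := by
  have hdd : d * d = 1 := by rcases hd with rfl | rfl <;> norm_num
  obtain ⟨α, β, h1⟩ := Int.isCoprime_iff_gcd_eq_one.mpr hcop
  set q''₀ := d * α with hq0
  set p''₀ := -d * β with hp0
  have hdet0 : p * q''₀ - p''₀ * q = d := by
    rw [hq0, hp0]
    have : p * (d * α) - (-d * β) * q = d * (α * p + β * q) := by ring
    rw [this, h1, mul_one]
  set t := q''₀ / q with ht
  refine ⟨p''₀ - t * p, q''₀ % q, Int.emod_nonneg _ (ne_of_gt hq), Int.emod_lt_of_pos _ hq, ?_, ?_⟩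
  · have hmod : q''₀ % q = q''₀ - q * t := by rw [ht, Int.emod_def]
    rw [hmod]
    have : p * (q''₀ - q * t) - (p''₀ - t * p) * q = p * q''₀ - p''₀ * q := by ring
    rw [this, hdet0]
  · refine ⟨-d * q, d * (q''₀ % q), ?_⟩
    have hmod : q''₀ % q = q''₀ - q * t := by rw [ht, Int.emod_def]
    have hdet : p * (q''₀ % q) - (p''₀ - t * p) * q = d := by
      rw [hmod]
      have : p * (q''₀ - q * t) - (p''₀ - t * p) * q = p * q''₀ - p''₀ * q := by ring
      rw [this, hdet0]
    have : -d * q * (p''₀ - t * p) + d * (q''₀ % q) * p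
        = d * (p * (q''₀ % q) - (p''₀ - t * p) * q) := by ring
    rw [this, hdet, hdd]

set_option maxHeartbeats 1000000 in
/-- Dirichlet approximation with numerator coprime to a given modulus D. -/
theorem dirichlet_approx_coprime_numerator :
    ∀ ε : ℝ, 0 < ε → ∃ C : ℝ, 0 < C ∧
      ∀ (x : ℝ) (D : ℕ), 0 < D →
        (∃ c : ℤ, |x - (c : ℝ)| ≤ 1 / (2 * (1 + C * (D : ℝ) ^ ε))) ∨
        (∃ (b : ℕ) (a : ℤ), 1 ≤ b ∧ (b : ℝ) ≤ 2 * (1 + C * (D : ℝ) ^ ε) ^ 2 ∧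
          Int.gcd a ((b : ℤ) * (D : ℤ)) = 1 ∧ |(b : ℝ) * x - (a : ℝ)| ≤ 1 / 2) := by
  intro ε hε
  obtain ⟨CJ, hCJpos, hJac⟩ := jacobsthal ε hε
  set C := max CJ 1 with hCdef
  have hC1 : (1 : ℝ) ≤ C := le_max_right _ _
  have hCJC : CJ ≤ C := le_max_left _ _
  have hCpos : 0 < C := lt_of_lt_of_le one_pos hC1
  refine ⟨C, hCpos, ?_⟩
  intro x D hD
  have hD1 : (1 : ℝ) ≤ (D : ℝ) := by exact_mod_cast hD
  have hDε : (1 : ℝ) ≤ (D : ℝ) ^ ε := Real.one_le_rpow hD1 hε.le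
  set Q : ℝ := 2 * (1 + C * (D : ℝ) ^ ε) with hQdef
  have hQ4 : (4 : ℝ) ≤ Q := by
    have : (1 : ℝ) ≤ C * (D : ℝ) ^ ε := by nlinarith
    rw [hQdef]; linarith
  have hQpos : 0 < Q := by linarith
  set n : ℕ := ⌊Q⌋₊ with hn
  have hn4 : 4 ≤ n := by
    rw [hn]
    exact Nat.le_floor (by exact_mod_cast hQ4)
  have hnpos : 0 < n := by omega
  have hnQ : (n : ℝ) ≤ Q := Nat.floor_le hQpos.le
  have hQn1 : Q ≤ (n : ℝ) + 1 := by
    have := Nat.lt_floor_add_one Q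
    push_cast at this ⊢
    linarith
  -- Dirichlet
  obtain ⟨j, q0, hq00, hq0n, hjq⟩ := Real.exists_int_int_abs_mul_sub_le x hnpos
  -- reduce the fraction
  set g : ℕ := Int.gcd j q0 with hg
  have hgpos : 0 < g := by
    rw [hg]
    exact Int.gcd_pos_of_ne_zero_right j (ne_of_gt hq00)
  have hgdvd1 : (g : ℤ) ∣ j := Int.gcd_dvd_left _ _
  have hgdvd2 : (g : ℤ) ∣ q0 := Int.gcd_dvd_right _ _
  set p : ℤ := j / g with hp
  set q : ℤ := q0 / g with hq
  have hq0eq : q0 = g * q := by rw [hq]; exact (Int.mul_ediv_cancel' hgdvd2).symm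
  have hjeq : j = g * p := by rw [hp]; exact (Int.mul_ediv_cancel' hgdvd1).symm
  have hqpos : 0 < q := by
    by_contra hneg
    push_neg at hneg
    have : q0 ≤ 0 := by
      rw [hq0eq]
      exact mul_nonpos_of_nonneg_of_nonpos (by exact_mod_cast hgpos.le) hneg
    omega
  have hcop : Int.gcd p q = 1 := by
    rw [hp, hq, hg]
    exact Int.gcd_div_gcd_div_gcd (by exact_mod_cast hgpos)
  have hqn : q ≤ (n : ℤ) := by
    have : q ≤ q0 := by
      rw [hq0eq]
      nlinarith [hqpos, (show (1 : ℤ) ≤ g by exact_mod_cast hgpos)]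
    omega
  -- the reduced approximation
  have happrox : |(q : ℝ) * x - (p : ℝ)| ≤ 1 / ((n : ℝ) + 1) := by
    have hgr : (1 : ℝ) ≤ (g : ℝ) := by exact_mod_cast hgpos
    have hcast : (q0 : ℝ) * x - (j : ℝ) = (g : ℝ) * ((q : ℝ) * x - (p : ℝ)) := by
      rw [hq0eq, hjeq]; push_cast; ring
    have h2 : |(q0 : ℝ) * x - (j : ℝ)| = (g : ℝ) * |(q : ℝ) * x - (p : ℝ)| := by
      rw [hcast, abs_mul, abs_of_nonneg (by linarith : (0:ℝ) ≤ (g:ℝ))]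
    have h3 : |(q : ℝ) * x - (p : ℝ)| ≤ |(q0 : ℝ) * x - (j : ℝ)| := by
      rw [h2]
      nlinarith [abs_nonneg ((q : ℝ) * x - (p : ℝ))]
    calc |(q : ℝ) * x - (p : ℝ)| ≤ |(q0 : ℝ) * x - (j : ℝ)| := h3
      _ ≤ 1 / ((n : ℝ) + 1) := by
          have := hjq
          push_cast at this ⊢
          linarith
  rcases eq_or_lt_of_le (show (1 : ℤ) ≤ q from hqpos) with hq1 | hq2
  · -- q = 1 : conclusion (i)
    left
    refine ⟨p, ?_⟩
    have : |x - (p : ℝ)| ≤ 1 / ((n : ℝ) + 1) := by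
      have := happrox
      rw [← hq1] at this
      push_cast at this
      simpa using this
    calc |x - (p : ℝ)| ≤ 1 / ((n : ℝ) + 1) := this
      _ ≤ 1 / Q := by
          apply one_div_le_one_div_of_le hQpos hQn1
      _ = 1 / (2 * (1 + C * (D : ℝ) ^ ε)) := by rw [hQdef]
  · -- q ≥ 2 : conclusion (ii)
    right
    set u : ℝ := (q : ℝ) * x - (p : ℝ) with hu
    set d : ℤ := if 0 ≤ u then -1 else 1 with hd
    have hdcases : d = 1 ∨ d = -1 := by
      rw [hd]; split <;> simp
    obtain ⟨p'', q'', hq''0, hq''q, hdet, hcp⟩ := exists_adjacent p q hqpos hcop d hdcases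
    obtain ⟨k, hk1, hkC, hkgcd⟩ := hJac p'' p D hD hcp
    set a : ℤ := p'' + (k : ℤ) * p with ha
    set b : ℤ := (k : ℤ) * q + q'' with hb
    have hbpos : 0 < b := by
      have : (1 : ℤ) ≤ (k : ℤ) := by exact_mod_cast hk1
      nlinarith
    have hdet2 : a * q - b * p = -d := by
      have : a * q - b * p = -(p * q'' - p'' * q) := by rw [ha, hb]; ring
      rw [this, hdet]
    have hdd : d * d = 1 := by rcases hdcases with h | h <;> rw [h] <;> norm_num
    set bN : ℕ := b.toNat with hbN
    have hbNb : (bN : ℤ) = b := Int.toNat_of_nonneg hbpos.le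
    have hbNr : (bN : ℝ) = (b : ℝ) := by exact_mod_cast hbNb
    clear_value C Q n g p q u d a b bN
    -- numeric facts
    have hq2r : (2 : ℝ) ≤ (q : ℝ) := by exact_mod_cast hq2
    have hqrQ : (q : ℝ) ≤ Q := le_trans (by exact_mod_cast hqn) hnQ
    have hbr : (b : ℝ) ≤ ((k : ℝ) + 1) * (q : ℝ) := by
      have hZ : b ≤ ((k : ℤ) + 1) * q := by
        rw [hb]
        have h1 : q'' ≤ q := le_of_lt hq''q
        have h2 : ((k : ℤ) + 1) * q = (k : ℤ) * q + q := by ring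
        linarith
      exact_mod_cast hZ
    have hkr : (k : ℝ) + 1 ≤ Q / 2 := by
      have h1 : (k : ℝ) ≤ C * (D : ℝ) ^ ε := by
        calc (k : ℝ) ≤ CJ * (D : ℝ) ^ ε := hkC
          _ ≤ C * (D : ℝ) ^ ε := mul_le_mul_of_nonneg_right hCJC (by positivity)
      rw [hQdef]; linarith
    refine ⟨bN, a, ?_, ?_, ?_, ?_⟩
    · have h0 : (0 : ℤ) < (bN : ℤ) := by rw [hbNb]; exact hbpos
      exact_mod_cast h0
    · rw [hbNr]
      have h1 : (b : ℝ) ≤ (Q / 2) * Q := by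
        calc (b : ℝ) ≤ ((k : ℝ) + 1) * (q : ℝ) := hbr
          _ ≤ (Q / 2) * Q := by
              apply mul_le_mul hkr hqrQ (by linarith) (by linarith)
      calc (b : ℝ) ≤ (Q / 2) * Q := h1
        _ = 2 * (1 + C * (D : ℝ) ^ ε) ^ 2 := by rw [hQdef]; ring
    · have hcab : IsCoprime a b := by
        refine ⟨-d * q, d * p, ?_⟩
        have : -d * q * a + d * p * b = -d * (a * q - b * p) := by ring
        rw [this, hdet2]
        have : -d * -d = d * d := by ring
        rw [this, hdd]
      have hcaD : IsCoprime a ((D : ℕ) : ℤ) := Int.isCoprime_iff_gcd_eq_one.mpr hkgcd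
      have : IsCoprime a ((bN : ℤ) * (D : ℤ)) := by
        rw [hbNb]
        exact hcab.mul_right hcaD
      exact Int.isCoprime_iff_gcd_eq_one.mp this
    · -- error bound
      have hbpos' : (0 : ℝ) < (b : ℝ) := by exact_mod_cast hbpos
      have hc : (a : ℝ) * (q : ℝ) - (b : ℝ) * (p : ℝ) = -(d : ℝ) := by exact_mod_cast hdet2
      have hid : (q : ℝ) * ((b : ℝ) * x - (a : ℝ)) = (d : ℝ) + (b : ℝ) * u := by
        have h1 : (q : ℝ) * ((b : ℝ) * x - (a : ℝ))
            = (b : ℝ) * u + ((b : ℝ) * (p : ℝ) - (a : ℝ) * (q : ℝ)) := by rw [hu]; ring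
        rw [h1]; linarith
      have hn1pos : (0 : ℝ) < (n : ℝ) + 1 := by positivity
      have hbu : (b : ℝ) * |u| ≤ (q : ℝ) / 2 := by
        have h1 : (b : ℝ) * |u| ≤ (((k : ℝ) + 1) * (q : ℝ)) * (1 / ((n : ℝ) + 1)) :=
          mul_le_mul hbr happrox (abs_nonneg u) (by positivity)
        have hkn : (k : ℝ) + 1 ≤ ((n : ℝ) + 1) / 2 := by linarith [hQn1, hkr]
        have h2 : (((k : ℝ) + 1) * (q : ℝ)) * (1 / ((n : ℝ) + 1)) ≤ (q : ℝ) / 2 := by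
          rw [mul_one_div, div_le_div_iff₀ hn1pos (by norm_num : (0:ℝ) < 2)]
          have h3 := mul_le_mul_of_nonneg_right hkn (by linarith : (0:ℝ) ≤ (q : ℝ))
          nlinarith [h3]
        linarith
      have habs : |(d : ℝ) + (b : ℝ) * u| ≤ (q : ℝ) / 2 := by
        by_cases hu0 : 0 ≤ u
        · have hd' : d = -1 := by rw [hd, if_pos hu0]
          have hdr : (d : ℝ) = -1 := by rw [hd']; norm_num
          have h1 : (0 : ℝ) ≤ (b : ℝ) * u := mul_nonneg hbpos'.le hu0
          have h2 : (b : ℝ) * u ≤ (q : ℝ) / 2 := by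
            calc (b : ℝ) * u ≤ (b : ℝ) * |u| := by
                  apply mul_le_mul_of_nonneg_left (le_abs_self u) hbpos'.le
              _ ≤ (q : ℝ) / 2 := hbu
          rw [hdr, abs_le]
          constructor <;> linarith
        · have hd' : d = 1 := by rw [hd, if_neg hu0]
          have hdr : (d : ℝ) = 1 := by rw [hd']; norm_num
          push_neg at hu0
          have h1 : (b : ℝ) * u ≤ 0 := mul_nonpos_of_nonneg_of_nonpos hbpos'.le hu0.le
          have h2 : -((q : ℝ) / 2) ≤ (b : ℝ) * u := by
            have h3 : -((b : ℝ) * u) = (b : ℝ) * |u| := by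
              rw [abs_of_neg hu0]; ring
            linarith [hbu, h3]
          rw [hdr, abs_le]
          constructor <;> linarith
      have hqabs : (q : ℝ) * |(b : ℝ) * x - (a : ℝ)| ≤ (q : ℝ) * (1 / 2) := by
        have h1 : (q : ℝ) * |(b : ℝ) * x - (a : ℝ)| = |(d : ℝ) + (b : ℝ) * u| := by
          rw [← hid, abs_mul, abs_of_pos (by linarith : (0:ℝ) < (q : ℝ))]
        rw [h1]
        calc |(d : ℝ) + (b : ℝ) * u| ≤ (q : ℝ) / 2 := habs
          _ = (q : ℝ) * (1 / 2) := by ring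
      rw [hbNr]
      exact le_of_mul_le_mul_left hqabs (by linarith : (0:ℝ) < (q : ℝ))
end

section
/- Let r > 0 and let [[F̄, Ē],[E, F]] ∈ SU(1,1) with E ≠ 0. If the closed hyperbolic ball of radius r centered at 0 in the Poincaré disk intersects the isometric circle {z : |Ez + F| = 1}, i.e. if (|F| − 1)/|E| ≤ tanh(r/2), then |E| ≤ sinh(r). -/
/-- If the isometric circle of [[F̄,Ē],[E,F]] ∈ SU(1,1) meets the hyperbolic ball
of radius r around 0 in the Poincaré disk, i.e. (|F| − 1)/|E| ≤ tanh(r/2),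
then |E| ≤ sinh r. -/
theorem isometric_circle_radius_bound (r : ℝ) (hr : 0 < r) (E F : ℂ)
    (hSU : ‖F‖ ^ 2 - ‖E‖ ^ 2 = 1) (hE : E ≠ 0)
    (h : (‖F‖ - 1) / ‖E‖ ≤ Real.tanh (r / 2)) :
    ‖E‖ ≤ Real.sinh r := by
  set e := ‖E‖ with he_def
  set f := ‖F‖ with hf_def
  have he : 0 < e := by simpa [he_def] using (norm_pos_iff.mpr hE)
  have hf : 0 ≤ f := norm_nonneg F
  set s := Real.sinh (r / 2) with hs_def
  set c := Real.cosh (r / 2) with hc_def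
  have hc : 0 < c := Real.cosh_pos _
  have hs : 0 < s := by positivity
  have hcs : c ^ 2 - s ^ 2 = 1 := by
    have := Real.cosh_sq_sub_sinh_sq (r / 2); nlinarith [this]
  have ht : Real.tanh (r / 2) = s / c := Real.tanh_eq_sinh_div_cosh _
  rw [ht] at h
  have h1 : (f - 1) * c ≤ s * e := (div_le_div_iff₀ he hc).mp h
  have h2 : (c * f) ^ 2 ≤ (s * e + c) ^ 2 := by
    have hL : 0 ≤ c * f := by positivity
    have hR : c * f ≤ s * e + c := by nlinarith
    nlinarith
  have h3 : e ≤ 2 * s * c := by nlinarith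
  have h4 : Real.sinh r = 2 * s * c := by
    rw [show r = 2 * (r / 2) by ring, Real.sinh_two_mul]
  linarith
end

section
/- For t ∈ ℝ and λ = 1/4 + t², writing s = 1/2 − it, the Legendre-function eigenvalue of the hyperbolic sphere-averaging operator satisfies: if 0 ≤ λ ≤ 1/4 (so s ∈ [1/2, 1] is real) then |P_{−1/2−it}(cosh T)| ≤ (T+1) e^{−(T/2)(1−√(1−4λ))} for all T ≥ 0. -/
open Real intervalIntegral

/-- Bound on the Legendre function P_{s−1}(cosh T), given by the Laplace
integral representation P_{s−1}(cosh T) = (1/π)∫₀^π (cosh T + sinh T cos θ)^{s−1} dθ,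
for s ∈ [1/2, 1] and T ≥ 0: P_{s−1}(cosh T) ≤ (T+1) e^{−(1−s)T}. -/

theorem legendre_eigenvalue_bound (s T : ℝ) (hs1 : 1 / 2 ≤ s) (hs2 : s ≤ 1)
    (hT : 0 ≤ T) :
    (1 / Real.pi) * ∫ θ in (0 : ℝ)..Real.pi,
        (Real.cosh T + Real.sinh T * Real.cos θ) ^ (s - 1)
      ≤ (T + 1) * Real.exp (-(1 - s) * T) := by
  have hπ : (0:ℝ) < π := Real.pi_pos
  set g : ℝ → ℝ := fun θ => (Real.cosh T + Real.sinh T * Real.cos θ) ^ (s - 1) with hgdef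
  have hsinh : 0 ≤ Real.sinh T := Real.sinh_nonneg_iff.mpr hT
  have hbase_ge : ∀ θ : ℝ, Real.exp (-T) ≤ Real.cosh T + Real.sinh T * Real.cos θ := by
    intro θ
    have h1 : -Real.sinh T ≤ Real.sinh T * Real.cos θ := by
      nlinarith [Real.neg_one_le_cos θ]
    have h2 : Real.cosh T - Real.sinh T = Real.exp (-T) := by
      rw [Real.cosh_eq, Real.sinh_eq]; ring
    linarith
  have hbase_pos : ∀ θ : ℝ, 0 < Real.cosh T + Real.sinh T * Real.cos θ :=
    fun θ => lt_of_lt_of_le (Real.exp_pos _) (hbase_ge θ)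
  -- identity: base = e^T cos²(θ/2) + e^{-T} sin²(θ/2), so base ≥ e^T cos²(θ/2)
  have hbase_ge2 : ∀ θ : ℝ, Real.exp T * Real.cos (θ/2) ^ 2 ≤
      Real.cosh T + Real.sinh T * Real.cos θ := by
    intro θ
    have hc : Real.cos (θ/2) ^ 2 = 1/2 + Real.cos θ / 2 := by
      have := Real.cos_sq (θ/2)
      rwa [show 2 * (θ/2) = θ by ring] at this
    have hs : Real.sin (θ/2) ^ 2 = 1 - Real.cos (θ/2) ^ 2 := by
      rw [Real.sin_sq]
    have key : Real.cosh T + Real.sinh T * Real.cos θ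
        = Real.exp T * Real.cos (θ/2) ^ 2 + Real.exp (-T) * Real.sin (θ/2) ^ 2 := by
      rw [hs, hc, Real.cosh_eq, Real.sinh_eq]; ring
    nlinarith [Real.exp_pos (-T), sq_nonneg (Real.sin (θ/2))]
  -- the split point
  set a : ℝ := π * (1 - Real.exp (-T)) with hadef
  have hexpT1 : Real.exp (-T) ≤ 1 := Real.exp_le_one_iff.mpr (by linarith)
  have ha0 : 0 ≤ a := by
    have : 0 ≤ 1 - Real.exp (-T) := by linarith
    positivity
  have haπ : a ≤ π := by
    have h := Real.exp_pos (-T)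
    nlinarith
  have hπa : π - a = π * Real.exp (-T) := by rw [hadef]; ring
  -- continuity / integrability of g
  have hgc : Continuous g := by
    apply Continuous.rpow_const
    · continuity
    · intro θ; exact Or.inl (hbase_pos θ).ne'
  -- pointwise bound 1: g θ ≤ exp ((1-s)T)
  have hbound1 : ∀ θ : ℝ, g θ ≤ Real.exp ((1 - s) * T) := by
    intro θ
    have h1 : g θ ≤ Real.exp (-T) ^ (s - 1) :=
      Real.rpow_le_rpow_of_nonpos (Real.exp_pos _) (hbase_ge θ) (by linarith)
    have h2 : Real.exp (-T) ^ (s - 1) = Real.exp ((1 - s) * T) := by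
      rw [← Real.exp_mul]; congr 1; ring
    linarith
  -- pointwise bound 2 on [0, a]
  have hbound2 : ∀ θ ∈ Set.Icc (0:ℝ) a, g θ ≤
      Real.exp (-(1 - s) * T) * (π * (π - θ)⁻¹) := by
    intro θ ⟨hθ0, hθa⟩
    have hπθpos : 0 < π - θ := by
      have := Real.exp_pos (-T)
      have : θ ≤ a := hθa
      nlinarith [Real.exp_pos (-T)]
    have hθπ : θ ≤ π := by linarith
    -- cos(θ/2) ≥ (π - θ)/π
    have hcosge : (π - θ) / π ≤ Real.cos (θ/2) := by
      have := Real.one_sub_mul_le_cos (x := θ/2) (by linarith) (by linarith)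
      have hrw : 1 - 2 / π * (θ/2) = (π - θ)/π := by field_simp
      linarith [hrw ▸ this]
    have hxpos : 0 < (π - θ)/π := by positivity
    have hx1 : (π - θ)/π ≤ 1 := by
      rw [div_le_one hπ]; linarith
    -- base ≥ exp T * ((π-θ)/π)^2
    have hb : Real.exp T * ((π - θ)/π) ^ 2 ≤ Real.cosh T + Real.sinh T * Real.cos θ := by
      have h2 : ((π - θ)/π) ^ 2 ≤ Real.cos (θ/2) ^ 2 := by nlinarith
      have := hbase_ge2 θ
      nlinarith [Real.exp_pos T]
    have hbpos : 0 < Real.exp T * ((π - θ)/π) ^ 2 := by positivity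
    have h1 : g θ ≤ (Real.exp T * ((π - θ)/π) ^ 2) ^ (s - 1) :=
      Real.rpow_le_rpow_of_nonpos hbpos hb (by linarith)
    have h2 : (Real.exp T * ((π - θ)/π) ^ 2) ^ (s - 1)
        = Real.exp (-(1-s)*T) * ((π - θ)/π) ^ (2*(s-1)) := by
      rw [Real.mul_rpow (Real.exp_pos T).le (by positivity), ← Real.exp_mul,
        ← Real.rpow_natCast ((π - θ)/π) 2, ← Real.rpow_mul hxpos.le]
      push_cast
      congr 1
      · congr 1; ring
    have h3 : ((π - θ)/π) ^ (2*(s-1)) ≤ ((π - θ)/π) ^ (-1 : ℝ) :=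
      Real.rpow_le_rpow_of_exponent_ge hxpos hx1 (by linarith)
    have h4 : ((π - θ)/π) ^ (-1 : ℝ) = π * (π - θ)⁻¹ := by
      rw [Real.rpow_neg_one]
      field_simp
    calc g θ ≤ (Real.exp T * ((π - θ)/π) ^ 2) ^ (s - 1) := h1
      _ = Real.exp (-(1-s)*T) * ((π - θ)/π) ^ (2*(s-1)) := h2
      _ ≤ Real.exp (-(1-s)*T) * ((π - θ)/π) ^ (-1:ℝ) := by
          exact mul_le_mul_of_nonneg_left h3 (Real.exp_pos _).le
      _ = Real.exp (-(1-s)*T) * (π * (π - θ)⁻¹) := by rw [h4]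
  have hg_int : ∀ u v : ℝ, IntervalIntegrable g MeasureTheory.volume u v :=
    fun u v => hgc.intervalIntegrable u v
  have hπae : 0 < π - a := by rw [hπa]; positivity
  set h : ℝ → ℝ := fun θ => Real.exp (-(1 - s) * T) * (π * (π - θ)⁻¹) with hhdef
  have hh_int : IntervalIntegrable h MeasureTheory.volume 0 a := by
    apply ContinuousOn.intervalIntegrable
    rw [Set.uIcc_of_le ha0]
    apply ContinuousOn.mul continuousOn_const
    apply ContinuousOn.mul continuousOn_const
    apply ContinuousOn.inv₀ (by fun_prop)
    intro x hx
    have hxa : x ≤ a := hx.2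
    have : 0 < π - x := by linarith
    exact this.ne'
  have hsplit : ∫ θ in (0:ℝ)..π, g θ = (∫ θ in (0:ℝ)..a, g θ) + ∫ θ in a..π, g θ :=
    (intervalIntegral.integral_add_adjacent_intervals (hg_int 0 a) (hg_int a π)).symm
  -- second piece
  have hI2 : ∫ θ in a..π, g θ ≤ π * Real.exp (-(1-s)*T) := by
    have h1 : ∫ θ in a..π, g θ ≤ ∫ θ in a..π, Real.exp ((1-s)*T) := by
      apply intervalIntegral.integral_mono_on haπ (hg_int a π) intervalIntegrable_const
      intro x _; exact hbound1 x
    rw [intervalIntegral.integral_const, smul_eq_mul] at h1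
    have h2 : (π - a) * Real.exp ((1-s)*T) = π * Real.exp (-(s*T)) := by
      rw [hπa, mul_assoc, ← Real.exp_add]
      congr 2
      ring
    have h3 : Real.exp (-(s*T)) ≤ Real.exp (-(1-s)*T) := by
      apply Real.exp_le_exp.mpr
      nlinarith
    have h4 : π * Real.exp (-(s*T)) ≤ π * Real.exp (-(1-s)*T) :=
      mul_le_mul_of_nonneg_left h3 hπ.le
    linarith
  -- first piece
  have hlog : ∫ θ in (0:ℝ)..a, (π - θ)⁻¹ = T := by
    have hc := intervalIntegral.integral_comp_sub_left (a := (0:ℝ)) (b := a)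
      (fun x => x⁻¹) π
    simp only [sub_zero] at hc
    rw [hc]
    have h0 : (0:ℝ) ∉ Set.uIcc (π - a) π := by
      rw [Set.uIcc_of_le (by linarith)]
      exact fun hm => absurd hm.1 (not_le.mpr hπae)
    rw [integral_inv h0, hπa, div_mul_cancel_left₀ hπ.ne', Real.exp_neg, inv_inv,
      Real.log_exp]
  have hI1 : ∫ θ in (0:ℝ)..a, g θ ≤ Real.exp (-(1-s)*T) * (π * T) := by
    have h1 : ∫ θ in (0:ℝ)..a, g θ ≤ ∫ θ in (0:ℝ)..a, h θ :=
      intervalIntegral.integral_mono_on ha0 (hg_int 0 a) hh_int hbound2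
    have h2 : ∫ θ in (0:ℝ)..a, h θ = Real.exp (-(1-s)*T) * (π * ∫ θ in (0:ℝ)..a, (π - θ)⁻¹) := by
      rw [hhdef]
      rw [intervalIntegral.integral_const_mul, intervalIntegral.integral_const_mul]
    rw [h2, hlog] at h1
    exact h1
  have htot : ∫ θ in (0:ℝ)..π, g θ ≤ π * ((T + 1) * Real.exp (-(1-s)*T)) := by
    rw [hsplit]
    have hr : Real.exp (-(1-s)*T) * (π*T) + π * Real.exp (-(1-s)*T)
        = π * ((T + 1) * Real.exp (-(1-s)*T)) := by ring
    linarith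
  calc (1/π) * ∫ θ in (0:ℝ)..π, g θ
      ≤ (1/π) * (π * ((T + 1) * Real.exp (-(1-s)*T))) :=
        mul_le_mul_of_nonneg_left htot (by positivity)
    _ = (T + 1) * Real.exp (-(1 - s) * T) := by
        field_simp
end
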